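/- Let p be a prime, A ⊆ F_p finite with 0 ∉ A, and define ν(t,α,β) as the number of 6-tuples (a₁₁, a₁₂, a₂₁, b₁₁, b₁₂, b₂₁) ∈ A^6 with a₁₁b₁₁ + a₁₂b₂₁ = t, (b₁₂t + a₁₂)/b₁₁ = α, (a₂₁t + b₂₁)/a₁₁ = β. Let R(A) be the set of matrices in SL_2(F_p) whose entries a₁₁, a₁₂, a₂₁ lie in A. Then (|A|^6 − |A|^5)² ≤ |R(A)·R(A)| · Σ_{t≠0, α, β} ν(t,α,β)². -/

import Mathlib

open Finset

/-- The number of 6-tuples `(a₁₁, a₁₂, a₂₁, b₁₁, b₁₂, b₂₁) ∈ A^6` satisfying the system. -/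
def nu {p : ℕ} [Fact p.Prime] (A : Finset (ZMod p)) (t α β : ZMod p) : ℕ :=
  ((A ×ˢ A ×ˢ A ×ˢ A ×ˢ A ×ˢ A).filter
    (fun x =>
      x.1 * x.2.2.2.1 + x.2.1 * x.2.2.2.2.2 = t ∧
      (x.2.2.2.2.1 * t + x.2.1) / x.2.2.2.1 = α ∧
      (x.2.2.1 * t + x.2.2.2.2.2) / x.1 = β)).card

/-- Cauchy–Schwarz over ℕ, with the support of `f` as the "dimension". -/
lemma nat_cs {ι : Type*} [DecidableEq ι] (s : Finset ι) (f : ι → ℕ) :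
    (∑ i ∈ s, f i) ^ 2 ≤ (s.filter fun i => f i ≠ 0).card * ∑ i ∈ s, f i ^ 2 := by
  have h1 : ∑ i ∈ s, f i = ∑ i ∈ s.filter (fun i => f i ≠ 0), f i :=
    (Finset.sum_filter_ne_zero s).symm
  have h2 : ((∑ i ∈ s.filter (fun i => f i ≠ 0), (f i : ℤ)) ^ 2 : ℤ) ≤
      (s.filter fun i => f i ≠ 0).card * ∑ i ∈ s.filter (fun i => f i ≠ 0), (f i : ℤ) ^ 2 :=
    sq_sum_le_card_mul_sum_sq
  have h3 : ∑ i ∈ s.filter (fun i => f i ≠ 0), f i ^ 2 ≤ ∑ i ∈ s, f i ^ 2 :=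
    Finset.sum_le_sum_of_subset (Finset.filter_subset _ _)
  rw [h1]
  have : ((∑ i ∈ s.filter (fun i => f i ≠ 0), f i : ℕ) : ℤ) ^ 2 ≤
      ((s.filter fun i => f i ≠ 0).card : ℤ) * (∑ i ∈ s.filter (fun i => f i ≠ 0), f i ^ 2 : ℕ) := by
    push_cast
    exact h2
  have := this.trans (by
    have : ((∑ i ∈ s.filter (fun i => f i ≠ 0), f i ^ 2 : ℕ) : ℤ) ≤ ((∑ i ∈ s, f i ^ 2 : ℕ) : ℤ) := by
      exact_mod_cast h3
    exact mul_le_mul_of_nonneg_left this (by positivity))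
  exact_mod_cast this

theorem stmt_2 (p : ℕ) [Fact p.Prime] (A : Finset (ZMod p)) (hA : (0 : ZMod p) ∉ A) :
    (A.card ^ 6 - A.card ^ 5) ^ 2 ≤
      (Finset.image₂ (· * ·)
          ((Finset.univ : Finset (Matrix (Fin 2) (Fin 2) (ZMod p))).filter
            (fun M => M.det = 1 ∧ M 0 0 ∈ A ∧ M 0 1 ∈ A ∧ M 1 0 ∈ A))
          ((Finset.univ : Finset (Matrix (Fin 2) (Fin 2) (ZMod p))).filter
            (fun M => M.det = 1 ∧ M 0 0 ∈ A ∧ M 0 1 ∈ A ∧ M 1 0 ∈ A))).card *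
        ∑ t ∈ (Finset.univ : Finset (ZMod p)).erase 0, ∑ α : ZMod p, ∑ β : ZMod p,
          nu A t α β ^ 2 := by
  classical
  set A6 := A ×ˢ A ×ˢ A ×ˢ A ×ˢ A ×ˢ A with hA6
  -- the "type" of 6-tuples
  set RA := ((Finset.univ : Finset (Matrix (Fin 2) (Fin 2) (ZMod p))).filter
      (fun M => M.det = 1 ∧ M 0 0 ∈ A ∧ M 0 1 ∈ A ∧ M 1 0 ∈ A)) with hRA
  -- the fiber map
  set F : (ZMod p × ZMod p × ZMod p × ZMod p × ZMod p × ZMod p) → ZMod p × ZMod p × ZMod p :=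
    fun x => (x.1 * x.2.2.2.1 + x.2.1 * x.2.2.2.2.2,
      (x.2.2.2.2.1 * (x.1 * x.2.2.2.1 + x.2.1 * x.2.2.2.2.2) + x.2.1) / x.2.2.2.1,
      (x.2.2.1 * (x.1 * x.2.2.2.1 + x.2.1 * x.2.2.2.2.2) + x.2.2.2.2.2) / x.1) with hF
  have hnu : ∀ t α β : ZMod p, nu A t α β = (A6.filter (fun x => F x = (t, α, β))).card := by
    intro t α β
    unfold nu
    rw [hA6]
    congr 1
    apply Finset.filter_congr
    intro x hx
    simp only [hF, Prod.ext_iff]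
    constructor <;> (rintro ⟨h1, h2, h3⟩; subst h1; exact ⟨rfl, h2, h3⟩)
  -- total sum
  have hsum_all : ∑ t : ZMod p, ∑ α : ZMod p, ∑ β : ZMod p, nu A t α β = A.card ^ 6 := by
    have : ∑ y : ZMod p × ZMod p × ZMod p, nu A y.1 y.2.1 y.2.2 = A6.card := by
      simp_rw [hnu]
      exact (Finset.card_eq_sum_card_fiberwise (fun x _ => Finset.mem_univ (F x))).symm
    rw [Fintype.sum_prod_type] at this
    simp_rw [Fintype.sum_prod_type] at this
    rw [this, hA6]
    simp [Finset.card_product]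
    ring
  -- the t = 0 part
  have ht0 : ∑ α : ZMod p, ∑ β : ZMod p, nu A 0 α β ≤ A.card ^ 5 := by
    set s0 := A6.filter (fun x => x.1 * x.2.2.2.1 + x.2.1 * x.2.2.2.2.2 = 0) with hs0
    set G : (ZMod p × ZMod p × ZMod p × ZMod p × ZMod p × ZMod p) → ZMod p × ZMod p :=
      fun x => ((x.2.2.2.2.1 * 0 + x.2.1) / x.2.2.2.1, (x.2.2.1 * 0 + x.2.2.2.2.2) / x.1) with hG
    have h1 : ∀ α β : ZMod p, nu A 0 α β = (s0.filter (fun x => G x = (α, β))).card := by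
      intro α β
      unfold nu
      rw [hs0, Finset.filter_filter, hA6]
      congr 1
      apply Finset.filter_congr
      intro x hx
      simp only [hG, Prod.ext_iff]
      try tauto
    have h2 : ∑ α : ZMod p, ∑ β : ZMod p, nu A 0 α β = s0.card := by
      have : ∑ y : ZMod p × ZMod p, (s0.filter (fun x => G x = y)).card = s0.card :=
        (Finset.card_eq_sum_card_fiberwise (fun x _ => Finset.mem_univ (G x))).symm
      rw [Fintype.sum_prod_type] at this
      simp_rw [h1]
      exact this
    rw [h2]
    -- inject s0 into A^5 by dropping the fourth coordinate
    have h3 : s0.card ≤ (A ×ˢ A ×ˢ A ×ˢ A ×ˢ A).card := by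
      apply Finset.card_le_card_of_injOn
        (fun x => (x.1, x.2.1, x.2.2.1, x.2.2.2.2.1, x.2.2.2.2.2))
      · intro x hx
        rw [Finset.mem_coe, hs0, Finset.mem_filter, hA6] at hx
        simp only [Finset.mem_coe, Finset.mem_product] at hx ⊢
        obtain ⟨⟨h1, h2, h3, h4, h5, h6⟩, _⟩ := hx
        exact ⟨h1, h2, h3, h5, h6⟩
      · intro x hx y hy hxy
        simp only [Finset.coe_filter, Set.mem_setOf_eq, hs0, hA6, Finset.mem_product] at hx hy
        obtain ⟨⟨hx1, _, _, _, _, _⟩, hx0⟩ := hx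
        obtain ⟨⟨hy1, _, _, _, _, _⟩, hy0⟩ := hy
        simp only [Prod.mk.injEq] at hxy
        obtain ⟨e1, e2, e3, e5, e6⟩ := hxy
        have hxne : x.1 ≠ 0 := fun h => hA (h ▸ hx1)
        have e4 : x.2.2.2.1 = y.2.2.2.1 := by
          apply mul_left_cancel₀ hxne
          have : x.1 * x.2.2.2.1 = -(x.2.1 * x.2.2.2.2.2) := by linear_combination hx0
          rw [this, e1, e2, e6]
          linear_combination -hy0
        obtain ⟨x1, x2, x3, x4, x5, x6⟩ := x
        obtain ⟨y1, y2, y3, y4, y5, y6⟩ := y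
        simp_all
    calc s0.card ≤ (A ×ˢ A ×ˢ A ×ˢ A ×ˢ A).card := h3
      _ = A.card ^ 5 := by simp [Finset.card_product]; ring
  -- switch the triple sum to a sum over the product finset
  set T : Finset (ZMod p × ZMod p × ZMod p) :=
    ((Finset.univ : Finset (ZMod p)).erase 0) ×ˢ (Finset.univ ×ˢ Finset.univ) with hT
  have hTsum : ∀ g : ZMod p → ZMod p → ZMod p → ℕ,
      ∑ y ∈ T, g y.1 y.2.1 y.2.2 =
      ∑ t ∈ (Finset.univ : Finset (ZMod p)).erase 0, ∑ α : ZMod p, ∑ β : ZMod p, g t α β := by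
    intro g
    rw [hT, Finset.sum_product]
    congr 1
    ext t
    rw [Finset.sum_product]
  -- lower bound for the sum over T
  have key1 : A.card ^ 6 - A.card ^ 5 ≤ ∑ y ∈ T, nu A y.1 y.2.1 y.2.2 := by
    rw [hTsum]
    have hsplit : (∑ α : ZMod p, ∑ β : ZMod p, nu A 0 α β) +
        ∑ t ∈ (Finset.univ : Finset (ZMod p)).erase 0, ∑ α : ZMod p, ∑ β : ZMod p, nu A t α β
        = A.card ^ 6 := by
      rw [← hsum_all]
      exact Finset.add_sum_erase Finset.univ (fun t => ∑ α : ZMod p, ∑ β : ZMod p, nu A t α β)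
        (Finset.mem_univ 0)
    omega
  -- the support of nu on T injects into the product set
  have key2 : (T.filter fun y => nu A y.1 y.2.1 y.2.2 ≠ 0).card ≤
      (Finset.image₂ (· * ·) RA RA).card := by
    apply Finset.card_le_card_of_injOn
      (fun y => !![y.1, y.2.1; y.2.2, (1 + y.2.1 * y.2.2) / y.1])
    · rintro ⟨t, α, β⟩ hy
      rw [Finset.mem_coe, Finset.mem_filter, hT, Finset.mem_product] at hy
      obtain ⟨⟨htmem, -⟩, hne⟩ := hy
      have htne : t ≠ 0 := Finset.ne_of_mem_erase htmem
      have hpos : 0 < nu A t α β := Nat.pos_of_ne_zero hne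
      rw [hnu t α β, Finset.card_pos] at hpos
      · obtain ⟨x, hx⟩ := hpos
        rw [Finset.mem_filter] at hx
        obtain ⟨hxA, hxF⟩ := hx
        simp only [hA6, Finset.mem_product] at hxA
        obtain ⟨ha, hb, hc, hd, he, hg⟩ := hxA
        simp only [hF, Prod.ext_iff] at hxF
        obtain ⟨ht, hα, hβ⟩ := hxF
        obtain ⟨a, b, c, d, e, g⟩ := x
        simp only at ha hb hc hd he hg ht hα hβ
        have hane : a ≠ 0 := fun h => hA (h ▸ ha)
        have hdne : d ≠ 0 := fun h => hA (h ▸ hd)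
        rw [Finset.mem_coe, Finset.mem_image₂]
        refine ⟨!![a, b; c, (1 + b * c) / a], ?_, !![d, e; g, (1 + e * g) / d], ?_, ?_⟩
        · rw [hRA, Finset.mem_filter]
          refine ⟨Finset.mem_univ _, ?_, ?_, ?_, ?_⟩ <;>
            simp [Matrix.det_fin_two_of, ha, hb, hc]
          field_simp
          ring
        · rw [hRA, Finset.mem_filter]
          refine ⟨Finset.mem_univ _, ?_, ?_, ?_, ?_⟩ <;>
            simp [Matrix.det_fin_two_of, hd, he, hg]
          field_simp
          ring
        · subst hα hβ ht
          have htne' : a * d + b * g ≠ 0 := htne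
          ext i j
          fin_cases i <;> fin_cases j <;>
            simp [Matrix.mul_apply, Fin.sum_univ_two] <;> field_simp <;> ring
    · rintro ⟨t, α, β⟩ - ⟨t', α', β'⟩ - hxy
      simp only at hxy
      have h00 := congrFun (congrFun hxy 0) 0
      have h01 := congrFun (congrFun hxy 0) 1
      have h10 := congrFun (congrFun hxy 1) 0
      simp at h00 h01 h10
      simp [h00, h01, h10]
  -- Cauchy–Schwarz
  have key3 : (∑ y ∈ T, nu A y.1 y.2.1 y.2.2) ^ 2 ≤
      (T.filter fun y => nu A y.1 y.2.1 y.2.2 ≠ 0).card *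
        ∑ y ∈ T, nu A y.1 y.2.1 y.2.2 ^ 2 :=
    nat_cs T _
  have hfinal : (A.card ^ 6 - A.card ^ 5) ^ 2 ≤
      (Finset.image₂ (· * ·) RA RA).card * ∑ y ∈ T, nu A y.1 y.2.1 y.2.2 ^ 2 := by
    calc (A.card ^ 6 - A.card ^ 5) ^ 2 ≤ (∑ y ∈ T, nu A y.1 y.2.1 y.2.2) ^ 2 :=
          Nat.pow_le_pow_left key1 2
      _ ≤ (T.filter fun y => nu A y.1 y.2.1 y.2.2 ≠ 0).card *
            ∑ y ∈ T, nu A y.1 y.2.1 y.2.2 ^ 2 := key3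
      _ ≤ (Finset.image₂ (· * ·) RA RA).card * ∑ y ∈ T, nu A y.1 y.2.1 y.2.2 ^ 2 :=
          Nat.mul_le_mul_right _ key2
  rw [← hTsum (fun t α β => nu A t α β ^ 2)]
  exact hfinal
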